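/- For the asymmetric digital payoff, the first-order-condition function f₂(x) = h₂'(x)·x − h₂(x), where h₂(x) = (ψ̂/(ψ̂−φ̂)) e^{φ̂(x−c)} − (φ̂/(ψ̂−φ̂)) e^{ψ̂(x−c)} with ψ̂ > 0 > φ̂, satisfies f₂(c) = −1, f₂'(x) = h₂''(x)·x, and f₂(x) → +∞ as x → −∞; hence there is a root x₂* < min(c, 0) with f₂(x₂*) = 0. -/

import Mathlib

open Filter

private lemma expDeriv (a k c x : ℝ) :
    HasDerivAt (fun y => a * Real.exp (k * (y - c))) (a * k * Real.exp (k * (x - c))) x := by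
  have h0 : HasDerivAt (fun y : ℝ => k * (y - c)) k x := by
    simpa using ((hasDerivAt_id x).sub_const c).const_mul k
  have h := (h0.exp).const_mul a
  exact h.congr_deriv (by ring)

private lemma mul_exp_atBot : Tendsto (fun x : ℝ => x * Real.exp x) atBot (nhds 0) := by
  have h := Real.tendsto_pow_mul_exp_neg_atTop_nhds_zero 1
  have h2 : Tendsto (fun x : ℝ => (-x) ^ 1 * Real.exp (-(-x))) atBot (nhds 0) :=
    h.comp tendsto_neg_atBot_atTop
  have : Tendsto (fun x : ℝ => -(x * Real.exp x)) atBot (nhds 0) := by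
    refine h2.congr fun x => by rw [pow_one, neg_neg]; ring
  have := this.neg
  simpa using this

theorem stmt_17 (ψ φ c : ℝ) (hψ : 0 < ψ) (hφ : φ < 0)
    (h₂ f₂ : ℝ → ℝ)
    (hh₂ : ∀ x, h₂ x = ψ / (ψ - φ) * Real.exp (φ * (x - c))
                     - φ / (ψ - φ) * Real.exp (ψ * (x - c)))
    (hf₂ : ∀ x, f₂ x = deriv h₂ x * x - h₂ x) :
    f₂ c = -1 ∧
    (∀ x, deriv f₂ x = deriv (deriv h₂) x * x) ∧
    Tendsto f₂ atBot atTop ∧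
    ∃ x : ℝ, x < min c 0 ∧ f₂ x = 0 := by
  have hs : (0:ℝ) < ψ - φ := by linarith
  set A : ℝ := ψ / (ψ - φ) with hA
  set B : ℝ := φ / (ψ - φ) with hB
  have hApos : 0 < A := div_pos hψ hs
  have hBneg : B < 0 := div_neg_of_neg_of_pos hφ hs
  have hh₂fun : h₂ = fun x => A * Real.exp (φ * (x - c)) - B * Real.exp (ψ * (x - c)) :=
    funext hh₂
  -- first derivative of h₂
  have hder : ∀ x, HasDerivAt h₂
      (A * φ * Real.exp (φ * (x - c)) - B * ψ * Real.exp (ψ * (x - c))) x := by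
    intro x
    rw [hh₂fun]
    exact (expDeriv A φ c x).sub (expDeriv B ψ c x)
  have hD : deriv h₂ = fun x => A * φ * Real.exp (φ * (x - c)) - B * ψ * Real.exp (ψ * (x - c)) :=
    funext fun x => (hder x).deriv
  -- second derivative of h₂
  have hder2 : ∀ x, HasDerivAt (deriv h₂)
      (A * φ * φ * Real.exp (φ * (x - c)) - B * ψ * ψ * Real.exp (ψ * (x - c))) x := by
    intro x
    rw [hD]
    have := (expDeriv (A * φ) φ c x).sub (expDeriv (B * ψ) ψ c x)
    exact this
  have hD2 : deriv (deriv h₂) =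
      fun x => A * φ * φ * Real.exp (φ * (x - c)) - B * ψ * ψ * Real.exp (ψ * (x - c)) :=
    funext fun x => (hder2 x).deriv
  have hAB : A * φ = B * ψ := by
    rw [hA, hB]; field_simp
  have hABsum : A - B = 1 := by
    rw [hA, hB]; field_simp
  -- explicit form of f₂
  have hf₂fun : f₂ = fun x =>
      (A * φ * Real.exp (φ * (x - c)) - B * ψ * Real.exp (ψ * (x - c))) * x
      - (A * Real.exp (φ * (x - c)) - B * Real.exp (ψ * (x - c))) := by
    funext x
    rw [hf₂ x, hD, hh₂ x]
  -- part 1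
  have part1 : f₂ c = -1 := by
    rw [hf₂fun]
    simp only [sub_self, mul_zero, Real.exp_zero, mul_one]
    rw [hAB, sub_self, zero_mul, zero_sub, hABsum]
  -- part 2
  have part2 : ∀ x, deriv f₂ x = deriv (deriv h₂) x * x := by
    intro x
    have hfd : HasDerivAt f₂
        ((A * φ * φ * Real.exp (φ * (x - c)) - B * ψ * ψ * Real.exp (ψ * (x - c))) * x) x := by
      rw [hf₂fun]
      have h1 := ((expDeriv (A * φ) φ c x).sub (expDeriv (B * ψ) ψ c x)).mul (hasDerivAt_id x)
      have h2 := (expDeriv A φ c x).sub (expDeriv B ψ c x)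
      have := h1.sub h2
      refine this.congr_deriv ?_
      simp only [id_eq, Pi.sub_apply]
      ring
    rw [hfd.deriv, hD2]
  -- part 3 : tendsto atBot atTop
  have hxc_bot : Tendsto (fun x : ℝ => x - c) atBot atBot :=
    tendsto_atBot_add_const_right _ (-c) tendsto_id
  have hφbot : Tendsto (fun x : ℝ => φ * (x - c)) atBot atTop :=
    (tendsto_const_mul_atTop_of_neg hφ).2 hxc_bot
  have hψbot : Tendsto (fun x : ℝ => ψ * (x - c)) atBot atBot :=
    (tendsto_const_mul_atBot_iff_pos hxc_bot).2 hψ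
  have hexpψ : Tendsto (fun x : ℝ => Real.exp (ψ * (x - c))) atBot (nhds 0) :=
    Real.tendsto_exp_atBot.comp hψbot
  have hexpψx : Tendsto (fun x : ℝ => Real.exp (ψ * (x - c)) * x) atBot (nhds 0) := by
    have hu : Tendsto (fun u : ℝ => Real.exp u * (u / ψ + c)) atBot (nhds 0) := by
      have h1 : Tendsto (fun u : ℝ => (1 / ψ) * (u * Real.exp u) + c * Real.exp u)
          atBot (nhds 0) := by
        have := ((mul_exp_atBot.const_mul (1 / ψ)).add (Real.tendsto_exp_atBot.const_mul c))
        simpa using this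
      refine h1.congr fun u => by ring
    have := hu.comp hψbot
    refine this.congr fun x => ?_
    simp only [Function.comp_apply]
    field_simp
    ring
  have part3 : Tendsto f₂ atBot atTop := by
    have hT1 : Tendsto (fun x => Real.exp (φ * (x - c)) * (A * φ * x - A)) atBot atTop := by
      apply Tendsto.atTop_mul_atTop₀
      · exact Real.tendsto_exp_atTop.comp hφbot
      · apply tendsto_atTop_add_const_right
        exact (tendsto_const_mul_atTop_of_neg (by nlinarith : A * φ < 0)).2 tendsto_id
    have hT2 : Tendsto (fun x => B * Real.exp (ψ * (x - c)) - B * ψ * (Real.exp (ψ * (x - c)) * x))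
        atBot (nhds 0) := by
      have := (hexpψ.const_mul B).sub (hexpψx.const_mul (B * ψ))
      simpa using this
    have := hT1.atTop_add hT2
    refine this.congr fun x => ?_
    rw [hf₂fun]
    ring
  -- part 4
  have hfmneg : f₂ (min c 0) < 0 := by
    rcases le_or_gt c 0 with hc | hc
    · rw [min_eq_left hc, part1]; norm_num
    · have hval : f₂ 0 = -(A * Real.exp (φ * (0 - c)) - B * Real.exp (ψ * (0 - c))) := by
        rw [hf₂fun]; ring
      rw [min_eq_right hc.le, hval]
      have e1 := Real.exp_pos (φ * (0 - c))
      have e2 := Real.exp_pos (ψ * (0 - c))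
      nlinarith
  have part4 : ∃ x : ℝ, x < min c 0 ∧ f₂ x = 0 := by
    have hcont : Continuous f₂ := by
      rw [hf₂fun]; fun_prop
    obtain ⟨N, hN1, hN2⟩ :=
      ((part3.eventually_ge_atTop 1).and (eventually_lt_atBot (min c 0))).exists
    have hsub : Set.Icc (f₂ (min c 0)) (f₂ N) ⊆ f₂ '' Set.Icc N (min c 0) :=
      intermediate_value_Icc' hN2.le hcont.continuousOn
    have h0mem : (0:ℝ) ∈ Set.Icc (f₂ (min c 0)) (f₂ N) := ⟨hfmneg.le, by linarith⟩
    obtain ⟨x, hx, hfx⟩ := hsub h0mem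
    refine ⟨x, ?_, hfx⟩
    rcases lt_or_eq_of_le hx.2 with h | h
    · exact h
    · exfalso; rw [h] at hfx; rw [hfx] at hfmneg; exact lt_irrefl 0 hfmneg
  exact ⟨part1, part2, part3, part4⟩
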